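/- arXiv:2203.13990 — 4 statements merged into one kernel-verified Lean document; each statement's English description precedes it below -/
import Mathlib

section
/- Let n ≥ 1 and fix vectors v_1, …, v_{n+1} ∈ ℝ^n with ⟪v_i, v_j⟫ = 1 if i = j and −1/n if i ≠ j, and let △^n = conv{v_1, …, v_{n+1}}. Then vol(△^n) · vol((△^n)°) = (n+1)^{n+1} / (n!)^2. -/
open MeasureTheory Matrix
open scoped ENNReal RealInnerProductSpace Pointwise

noncomputable section

def polarBody {n : ℕ} (K : Set (EuclideanSpace ℝ (Fin n))) : Set (EuclideanSpace ℝ (Fin n)) :=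
  {y | ∀ x ∈ K, inner ℝ x y ≤ (1 : ℝ)}

lemma corner_vol : ∀ (n : ℕ) (c : ℝ), 0 ≤ c →
    volume {x : Fin n → ℝ | (∀ i, 0 ≤ x i) ∧ ∑ i, x i ≤ c} = ENNReal.ofReal (c ^ n / n.factorial) := by
  intro n
  induction n with
  | zero =>
    intro c hc
    have : {x : Fin 0 → ℝ | (∀ i, 0 ≤ x i) ∧ ∑ i, x i ≤ c} = Set.univ := by
      ext x; simp [hc]
    rw [this]
    rw [MeasureTheory.volume_pi, Measure.pi_univ]; simp
  | succ n ih =>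
    intro c hc
    have hmp := MeasureTheory.measurePreserving_piFinSuccAbove (fun _ : Fin (n+1) => (volume : Measure ℝ)) 0
    set e := MeasurableEquiv.piFinSuccAbove (fun _ : Fin (n+1) => ℝ) 0 with he
    set T : Set (ℝ × (Fin n → ℝ)) :=
      {p | 0 ≤ p.1 ∧ (∀ i, 0 ≤ p.2 i) ∧ p.1 + ∑ i, p.2 i ≤ c} with hT
    have hTm : MeasurableSet T := by
      rw [hT, Set.setOf_and, Set.setOf_and]
      refine MeasurableSet.inter ?_ (MeasurableSet.inter ?_ ?_)
      · exact measurableSet_le measurable_const measurable_fst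
      · rw [Set.setOf_forall]
        exact MeasurableSet.iInter fun i =>
          measurableSet_le measurable_const (measurable_snd.eval)
      · exact measurableSet_le
          (measurable_fst.add (Finset.univ.measurable_sum fun i _ => measurable_snd.eval))
          measurable_const
    have hpre : {x : Fin (n+1) → ℝ | (∀ i, 0 ≤ x i) ∧ ∑ i, x i ≤ c} = e ⁻¹' T := by
      ext x
      simp only [Set.mem_setOf_eq, Set.mem_preimage, hT, he, MeasurableEquiv.piFinSuccAbove_apply, Fin.insertNthEquiv, Fin.removeNth, Equiv.coe_fn_symm_mk]
      constructor
      · rintro ⟨h1, h2⟩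
        refine ⟨h1 0, fun i => h1 _, ?_⟩
        rwa [Fin.sum_univ_succAbove x 0] at h2
      · rintro ⟨h1, h2, h3⟩
        constructor
        · intro i
          rcases Fin.eq_zero_or_eq_succ i with rfl | ⟨j, rfl⟩
          · exact h1
          · exact h2 j
        · rw [Fin.sum_univ_succAbove x 0]
          exact h3
    rw [hpre, MeasureTheory.volume_pi, hmp.measure_preimage hTm.nullMeasurableSet,
      Measure.prod_apply hTm]
    have hslice : ∀ a : ℝ, (Measure.pi fun _ : Fin n => (volume : Measure ℝ)) (Prod.mk a ⁻¹' T)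
        = Set.indicator (Set.Icc 0 c) (fun a => ENNReal.ofReal ((c - a) ^ n / n.factorial)) a := by
      intro a
      by_cases ha : a ∈ Set.Icc (0:ℝ) c
      · rw [Set.indicator_of_mem ha]
        have hps : Prod.mk a ⁻¹' T = {y : Fin n → ℝ | (∀ i, 0 ≤ y i) ∧ ∑ i, y i ≤ c - a} := by
          ext y
          simp only [hT, Set.mem_preimage, Set.mem_setOf_eq, ha.1, true_and,
            ← le_sub_iff_add_le']
        rw [hps, ← MeasureTheory.volume_pi, ih (c - a) (by linarith [ha.2])]
      · rw [Set.indicator_of_notMem ha]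
        have hps : Prod.mk a ⁻¹' T = ∅ := by
          ext y
          simp only [hT, Set.mem_preimage, Set.mem_setOf_eq, Set.mem_empty_iff_false, iff_false,
            not_and]
          intro h0 hy hsum
          apply ha
          refine ⟨h0, ?_⟩
          have : 0 ≤ ∑ i, y i := Finset.sum_nonneg fun i _ => hy i
          linarith
        simp [hps]
    simp only [hslice]
    rw [lintegral_indicator measurableSet_Icc]
    have hcont : Continuous fun a : ℝ => (c - a) ^ n / n.factorial := by fun_prop
    have hint : MeasureTheory.IntegrableOn (fun a : ℝ => (c - a) ^ n / n.factorial)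
        (Set.Icc 0 c) volume := hcont.integrableOn_Icc
    have hnn : ∀ᵐ a ∂(volume.restrict (Set.Icc (0:ℝ) c)), 0 ≤ (c - a) ^ n / n.factorial := by
      filter_upwards [MeasureTheory.ae_restrict_mem measurableSet_Icc] with a ha
      have h2 : (0:ℝ) ≤ c - a := by linarith [ha.2]
      positivity
    rw [← MeasureTheory.ofReal_integral_eq_lintegral_ofReal hint hnn]
    have h1 : (∫ a in Set.Icc (0:ℝ) c, (c - a) ^ n / n.factorial)
        = ∫ a in (0:ℝ)..c, (c - a) ^ n / n.factorial := by
      rw [MeasureTheory.integral_Icc_eq_integral_Ioc, intervalIntegral.integral_of_le hc]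
    rw [h1, intervalIntegral.integral_div, intervalIntegral.integral_comp_sub_left
      (fun x => x ^ n) c, sub_self, sub_zero, integral_pow]
    congr 1
    rw [Nat.factorial_succ]
    push_cast
    have hn1 : (n : ℝ) + 1 ≠ 0 := by positivity
    have hf : (n.factorial : ℝ) ≠ 0 := Nat.cast_ne_zero.2 n.factorial_ne_zero
    field_simp
    simp


lemma corner_meas (n : ℕ) (c : ℝ) :
    MeasurableSet {x : Fin n → ℝ | (∀ i, 0 ≤ x i) ∧ ∑ i, x i ≤ c} := by
  rw [Set.setOf_and]
  refine MeasurableSet.inter ?_ ?_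
  · rw [Set.setOf_forall]
    exact MeasurableSet.iInter fun i => measurableSet_le measurable_const (measurable_pi_apply i)
  · exact measurableSet_le (Finset.univ.measurable_sum fun i _ => measurable_pi_apply i)
      measurable_const

lemma vol_euclid {n : ℕ} (S : Set (EuclideanSpace ℝ (Fin n)))
    (hS : NullMeasurableSet S (volume : Measure (EuclideanSpace ℝ (Fin n)))) :
    (volume : Measure (EuclideanSpace ℝ (Fin n))) S = (volume : Measure (Fin n → ℝ)) ((MeasurableEquiv.toLp 2 (Fin n → ℝ)) ⁻¹' S) := by
  have h := (EuclideanSpace.volume_preserving_symm_measurableEquiv_toLp (ι := Fin n)).symm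
  have h2 := h.measure_preimage hS
  exact h2.symm

theorem stmt12 (n : ℕ) (hn : 1 ≤ n) (v : Fin (n + 1) → EuclideanSpace ℝ (Fin n))
    (hv : ∀ i j : Fin (n + 1), inner ℝ (v i) (v j) = if i = j then (1 : ℝ) else -1 / n) :
    volume (convexHull ℝ (Set.range v)) * volume (polarBody (convexHull ℝ (Set.range v)))
      = ((n : ℝ≥0∞) + 1) ^ (n + 1) / (n.factorial : ℝ≥0∞) ^ 2 := by
  have hn0 : (n : ℝ) ≠ 0 := Nat.cast_ne_zero.2 (by omega)
  have hnpos : (0:ℝ) < n := by exact_mod_cast Nat.pos_of_ne_zero (by omega)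
  set u : (EuclideanSpace ℝ (Fin n)) := v (Fin.last n) with hu
  set w : Fin n → (EuclideanSpace ℝ (Fin n)) := fun i => v i.castSucc - u with hw
  set K := convexHull ℝ (Set.range v) with hK
  -- sum of vertices is zero
  have hkey : ∀ i : Fin (n+1), ∑ j, (if i = j then (1:ℝ) else -1/n) = 0 := by
    intro i
    have hsp : ∀ j : Fin (n+1), (if i = j then (1:ℝ) else -1/n) = (-1/n) + (if i = j then (1:ℝ) + 1/(n:ℝ) else 0) := by
      intro j; split_ifs <;> ring
    rw [Finset.sum_congr rfl fun j _ => hsp j, Finset.sum_add_distrib, Finset.sum_ite_eq]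
    simp only [Finset.mem_univ, if_true, Finset.sum_const, Finset.card_univ, Fintype.card_fin,
      nsmul_eq_mul]
    push_cast
    field_simp
    ring
  have hsum : ∑ i, v i = 0 := by
    have h0 : ⟪∑ i, v i, ∑ j, v j⟫ = 0 := by
      rw [sum_inner]
      rw [Finset.sum_congr rfl fun i _ => inner_sum (𝕜 := ℝ) Finset.univ v (v i)]
      rw [Finset.sum_congr rfl fun i (_ : i ∈ Finset.univ) =>
        Finset.sum_congr rfl fun j _ => hv i j]
      rw [Finset.sum_congr rfl fun i _ => hkey i]
      simp
    exact inner_self_eq_zero.mp h0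
  -- gram matrix of w
  have hww : ∀ i j, ⟪w i, w j⟫ = if i = j then (2:ℝ)+2/n else 1+1/n := by
    intro i j
    simp only [hw, hu, inner_sub_left, inner_sub_right, hv, Fin.castSucc_inj,
      if_neg (Fin.castSucc_lt_last i).ne, if_neg (Fin.castSucc_lt_last j).ne',
      if_pos rfl]
    split_ifs <;> ring
  -- linear independence of w
  have hli : LinearIndependent ℝ w := by
    rw [Fintype.linearIndependent_iff]
    intro g hg
    have h0 : ∀ j, (1+1/(n:ℝ)) * ((∑ i, g i) + g j) = 0 := by
      intro j
      have hgj := congrArg (fun x => ⟪x, w j⟫) hg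
      simp only [sum_inner, real_inner_smul_left, inner_zero_left] at hgj
      rw [Finset.sum_congr rfl fun i (_ : i ∈ Finset.univ) => by rw [hww i j]] at hgj
      have hsp : ∀ i : Fin n, g i * (if i = j then (2:ℝ)+2/n else 1+1/n)
          = ((1:ℝ)+1/(n:ℝ)) * g i + (if i = j then ((1:ℝ)+1/(n:ℝ)) * g i else 0) := by
        intro i; split_ifs <;> ring
      rw [Finset.sum_congr rfl fun i _ => hsp i, Finset.sum_add_distrib,
        Finset.sum_ite_eq' Finset.univ j] at hgj
      simp only [Finset.mem_univ, if_true, ← Finset.mul_sum] at hgj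
      linarith [hgj]
    have h1 : (1+1/(n:ℝ)) ≠ 0 := by positivity
    have hgj : ∀ j, g j = -(∑ i, g i) := by
      intro j
      have := mul_eq_zero.mp (h0 j)
      rcases this with h | h
      · exact absurd h h1
      · linarith
    have hs0 : (∑ i, g i) = 0 := by
      by_cases hs : (∑ i, g i) = 0
      · exact hs
      · exfalso
        have h2 : (∑ i, g i) = ∑ i : Fin n, -(∑ j, g j) :=
          Finset.sum_congr rfl fun j _ => hgj j
        rw [Finset.sum_const, Finset.card_univ, Fintype.card_fin, nsmul_eq_mul] at h2
        have : (∑ i, g i) * (1 + (n:ℝ)) = 0 := by linarith [h2]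
        have := mul_eq_zero.mp this
        rcases this with h | h
        · exact hs h
        · linarith
    intro j
    rw [hgj j, hs0, neg_zero]
  -- vectors determined by inner products against v
  haveI : Nonempty (Fin n) := ⟨⟨0, by omega⟩⟩
  set b : Module.Basis (Fin n) ℝ (EuclideanSpace ℝ (Fin n)) := basisOfLinearIndependentOfCardEqFinrank hli
    (by simp [finrank_euclideanSpace_fin]) with hb
  have hbw : ∀ i, b i = w i := by
    intro i; rw [hb, coe_basisOfLinearIndependentOfCardEqFinrank]
  have hdetv : ∀ y z : (EuclideanSpace ℝ (Fin n)), (∀ j, ⟪v j, y⟫ = ⟪v j, z⟫) → y = z := by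
    intro y z h
    have hd : ∀ j : Fin (n+1), ⟪v j, y - z⟫ = 0 := by
      intro j; rw [inner_sub_right, h j, sub_self]
    have hwd : ∀ i : Fin n, ⟪w i, y - z⟫ = 0 := by
      intro i
      have h1 := hd i.castSucc
      have h2 := hd (Fin.last n)
      simp [hw, hu, inner_sub_left, h1, h2]
    have hdd : ⟪y - z, y - z⟫ = 0 := by
      nth_rewrite 1 [← Module.Basis.sum_repr b (y - z)]
      rw [sum_inner]
      refine Finset.sum_eq_zero fun i _ => ?_
      rw [real_inner_smul_left, hbw, hwd, mul_zero]
    exact sub_eq_zero.mp (inner_self_eq_zero.mp hdd)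
  -- polar body description
  have hP : polarBody K = {y : (EuclideanSpace ℝ (Fin n)) | ∀ i, ⟪v i, y⟫ ≤ 1} := by
    ext y
    simp only [polarBody, Set.mem_setOf_eq]
    constructor
    · intro h i
      exact h (v i) (subset_convexHull ℝ _ (Set.mem_range_self i))
    · intro h x hx
      have hlin : IsLinearMap ℝ (fun x : (EuclideanSpace ℝ (Fin n)) => ⟪x, y⟫) :=
        ⟨fun a b => inner_add_left a b y, fun c x => real_inner_smul_left x y c⟩
      have hconv : Convex ℝ {x : (EuclideanSpace ℝ (Fin n)) | ⟪x, y⟫ ≤ 1} :=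
        convex_halfSpace_le hlin 1
      have hsub : K ⊆ {x : (EuclideanSpace ℝ (Fin n)) | ⟪x, y⟫ ≤ 1} := by
        rw [hK]
        apply convexHull_min _ hconv
        rintro _ ⟨i, rfl⟩
        exact h i
      exact hsub hx
  -- polar body is -n K
  have hPK : polarBody K = (-(n:ℝ)) • K := by
    rw [hP]
    ext y
    simp only [Set.mem_setOf_eq]
    constructor
    · intro hy
      set t : Fin (n+1) → ℝ := fun i => (1 - ⟪v i, y⟫) / (n + 1) with hts
      have hsc : ∑ i, ⟪v i, y⟫ = 0 := by
        rw [← sum_inner, hsum, inner_zero_left]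
      have ht0 : ∀ i, 0 ≤ t i := fun i => by
        rw [hts]
        have h1 : (0:ℝ) ≤ 1 - ⟪v i, y⟫ := by linarith [hy i]
        have h2 : (0:ℝ) < n + 1 := by positivity
        exact div_nonneg h1 h2.le
      have ht1 : ∑ i, t i = 1 := by
        rw [hts]
        rw [← Finset.sum_div, Finset.sum_sub_distrib, hsc, sub_zero, Finset.sum_const,
          Finset.card_univ, Fintype.card_fin, nsmul_eq_mul, mul_one]
        push_cast
        field_simp
      have hmem : (∑ i, t i • v i) ∈ K := by
        have h := Finset.centerMass_mem_convexHull (Finset.univ : Finset (Fin (n+1)))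
          (fun i _ => ht0 i) (by rw [ht1]; norm_num) (fun i _ => Set.mem_range_self (f := v) i)
        rw [Finset.centerMass, ht1, inv_one, one_smul] at h
        exact h
      refine ⟨∑ i, t i • v i, hmem, ?_⟩
      apply hdetv
      intro j
      rw [inner_smul_right, inner_sum]
      have hsp : ∀ i, ⟪v j, t i • v i⟫ = t i * (if j = i then (1:ℝ) else -1/n) := by
        intro i; rw [real_inner_smul_right, hv]
      rw [Finset.sum_congr rfl fun i _ => hsp i]
      have hsp2 : ∀ i : Fin (n+1), t i * (if j = i then (1:ℝ) else -1/n)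
          = (-1/n) * t i + (if j = i then (1 + 1/(n:ℝ)) * t i else 0) := by
        intro i; split_ifs <;> ring
      rw [Finset.sum_congr rfl fun i _ => hsp2 i, Finset.sum_add_distrib,
        Finset.sum_ite_eq Finset.univ j]
      simp only [Finset.mem_univ, if_true, ← Finset.mul_sum, ht1, mul_one]
      rw [hts]
      have hc := hy j
      field_simp
      ring
    · rintro ⟨x, hx, rfl⟩
      intro i
      have hC : Convex ℝ {x : (EuclideanSpace ℝ (Fin n)) | ∀ j, ⟪v j, (-(n:ℝ)) • x⟫ ≤ 1} := by
        rw [Set.setOf_forall]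
        refine convex_iInter fun j => ?_
        have hlin : IsLinearMap ℝ (fun x : (EuclideanSpace ℝ (Fin n)) => ⟪v j, (-(n:ℝ)) • x⟫) := by
          constructor
          · intro a b; rw [smul_add, inner_add_right]
          · intro c x
            rw [smul_comm, inner_smul_right]
            rfl
        exact convex_halfSpace_le hlin 1
      have hsub : K ⊆ {x : (EuclideanSpace ℝ (Fin n)) | ∀ j, ⟪v j, (-(n:ℝ)) • x⟫ ≤ 1} := by
        rw [hK]
        apply convexHull_min _ hC
        rintro _ ⟨k, rfl⟩ j
        rw [inner_smul_right, hv]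
        split_ifs
        · nlinarith [hnpos]
        · have he : -(n:ℝ) * (-1/n) = 1 := by field_simp
          rw [he]
      exact hsub hx i
  -- linear map sending basis to w
  set bp : Module.Basis (Fin n) ℝ (EuclideanSpace ℝ (Fin n)) := PiLp.basisFun 2 ℝ (Fin n) with hbp
  set T : (EuclideanSpace ℝ (Fin n)) →ₗ[ℝ] (EuclideanSpace ℝ (Fin n)) := bp.constr ℝ w with hT
  have hTapp : ∀ x : (EuclideanSpace ℝ (Fin n)), T x = ∑ i, x i • w i := by
    intro x
    rw [hT, Module.Basis.constr_apply_fintype]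
    refine Finset.sum_congr rfl fun i _ => ?_
    rw [Module.Basis.equivFun_apply, hbp, PiLp.basisFun_repr]
  -- determinant squared
  set M := LinearMap.toMatrix bp bp T with hM
  have hMij : ∀ i j, M i j = w j i := by
    intro i j
    rw [hM, LinearMap.toMatrix_apply, hT, Module.Basis.constr_basis, hbp, PiLp.basisFun_repr]
  have hdet2 : (LinearMap.det T)^2 = ((n+1:ℝ)/n)^n * (n+1) := by
    have hG : Mᵀ * M = ((n+1:ℝ)/n) • (1 + (Matrix.replicateCol (Fin 1) (1 : Fin n → ℝ) * Matrix.replicateRow (Fin 1) (1 : Fin n → ℝ) : Matrix (Fin n) (Fin n) ℝ)) := by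
      ext i j
      rw [Matrix.mul_apply]
      have hl : ∑ k, Mᵀ i k * M k j = ⟪w i, w j⟫ := by
        rw [PiLp.inner_apply]
        refine Finset.sum_congr rfl fun k _ => ?_
        rw [Matrix.transpose_apply, hMij, hMij]
        simp [RCLike.inner_apply, mul_comm]
      rw [hl, hww]
      simp only [Matrix.smul_apply, Matrix.add_apply, Matrix.one_apply, Matrix.mul_apply,
        Matrix.replicateCol_apply, Matrix.replicateRow_apply, Finset.sum_const, Finset.card_univ,
        Fintype.card_fin, nsmul_eq_mul, Pi.one_apply, smul_eq_mul]
      split_ifs <;> field_simp <;> ring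
    have h1 : (LinearMap.det T)^2 = (Mᵀ * M).det := by
      rw [Matrix.det_mul, Matrix.det_transpose, ← LinearMap.det_toMatrix bp T, ← hM, sq]
    rw [h1, hG, Matrix.det_smul]
    erw [Matrix.det_one_add_replicateCol_mul_replicateRow]
    simp only [dotProduct, Pi.one_apply, mul_one, Finset.sum_const, Finset.card_univ,
      Fintype.card_fin, nsmul_eq_mul, Fintype.card_fin]
    ring
  -- corner simplex in (EuclideanSpace ℝ (Fin n))
  set Δ : Set (EuclideanSpace ℝ (Fin n)) := {x : (EuclideanSpace ℝ (Fin n)) | (∀ i, 0 ≤ x i) ∧ ∑ i, x i ≤ 1} with hΔ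
  have hΔvol : volume Δ = ENNReal.ofReal (1 / n.factorial) := by
    have hm : MeasurableSet {x : Fin n → ℝ | (∀ i, 0 ≤ x i) ∧ ∑ i, x i ≤ 1} := corner_meas n 1
    have hmE : MeasurableSet Δ := (MeasurableEquiv.toLp 2 (Fin n → ℝ)).symm.measurable hm
    rw [hΔ, vol_euclid _ hmE.nullMeasurableSet]
    have h := corner_vol n 1 zero_le_one
    rw [one_pow] at h
    exact h
  -- hull description
  have hsingle_eq : ∀ i : Fin n, (EuclideanSpace.single i 1 : (EuclideanSpace ℝ (Fin n))) = bp i := by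
    intro i
    rw [hbp]
    ext j
    rw [PiLp.basisFun_apply]
  have hhull : convexHull ℝ (insert (0:(EuclideanSpace ℝ (Fin n))) (Set.range fun i => (EuclideanSpace.single i 1 : (EuclideanSpace ℝ (Fin n))))) = Δ := by
    apply Set.Subset.antisymm
    · apply convexHull_min
      · rintro x hx
        rcases Set.mem_insert_iff.mp hx with rfl | ⟨i, rfl⟩
        · exact ⟨fun i => le_refl 0, by simp [hΔ]⟩
        · show (EuclideanSpace.single i 1 : (EuclideanSpace ℝ (Fin n))) ∈ Δ
          refine ⟨fun j => ?_, ?_⟩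
          · rw [EuclideanSpace.single_apply]
            split_ifs <;> norm_num
          · have h2 : ∑ j, (EuclideanSpace.single i 1 : (EuclideanSpace ℝ (Fin n))) j = 1 := by
              simp only [EuclideanSpace.single_apply]
              rw [Finset.sum_ite_eq' Finset.univ i]
              simp
            exact le_of_eq h2
      · intro x hx y hy a c ha hc hac
        refine ⟨fun i => ?_, ?_⟩
        · have : (a • x + c • y) i = a * x i + c * y i := rfl
          rw [this]
          exact add_nonneg (mul_nonneg ha (hx.1 i)) (mul_nonneg hc (hy.1 i))
        · have : ∀ i, (a • x + c • y) i = a * x i + c * y i := fun _ => rfl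
          rw [Finset.sum_congr rfl fun i _ => this i, Finset.sum_add_distrib,
            ← Finset.mul_sum, ← Finset.mul_sum]
          nlinarith [mul_le_mul_of_nonneg_left hx.2 ha, mul_le_mul_of_nonneg_left hy.2 hc]
    · intro x hx
      have hx1 := hx.1
      have hx2 := hx.2
      have hxx : ∑ i, x i • (EuclideanSpace.single i 1 : (EuclideanSpace ℝ (Fin n))) = x := by
        rw [Finset.sum_congr rfl fun i (_ : i ∈ Finset.univ) => by rw [hsingle_eq i]]
        have hrepr : ∀ i, x i = bp.repr x i := fun i => by rw [hbp, PiLp.basisFun_repr]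
        rw [Finset.sum_congr rfl fun i (_ : i ∈ Finset.univ) => by rw [hrepr i]]
        exact Module.Basis.sum_repr bp x
      have h := Finset.centerMass_mem_convexHull (Finset.univ : Finset (Option (Fin n)))
        (s := insert (0:(EuclideanSpace ℝ (Fin n))) (Set.range fun i => (EuclideanSpace.single i 1 : (EuclideanSpace ℝ (Fin n)))))
        (w := fun o => Option.elim o (1 - ∑ i, x i) (fun i => x i))
        (z := fun o => Option.elim o 0 (fun i => (EuclideanSpace.single i 1 : (EuclideanSpace ℝ (Fin n)))))
        (fun o _ => by rcases o with _ | i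
                       · simpa using by linarith [hx2]
                       · exact hx1 i)
        (by rw [Fintype.sum_option]; simp)
        (fun o _ => by rcases o with _ | i
                       · exact Set.mem_insert _ _
                       · exact Set.mem_insert_iff.mpr (Or.inr (Set.mem_range_self i)))
      rw [Finset.centerMass] at h
      rw [Fintype.sum_option] at h
      simp only [Option.elim] at h
      rw [Fintype.sum_option] at h
      simp only [Option.elim, smul_zero, zero_add] at h
      have hsw : (1 - ∑ i, x i) + ∑ i, x i = 1 := by ring
      rw [hsw, inv_one, one_smul, hxx] at h
      exact h
  have hTimg : T '' Δ = convexHull ℝ (insert 0 (Set.range w)) := by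
    rw [← hhull, LinearMap.image_convexHull]
    congr 1
    rw [Set.image_insert_eq, map_zero, ← Set.range_comp]
    have hcomp : (⇑T ∘ fun i : Fin n => (EuclideanSpace.single i 1 : (EuclideanSpace ℝ (Fin n)))) = w := by
      funext i
      show T (EuclideanSpace.single i 1) = w i
      rw [hsingle_eq i, hT, Module.Basis.constr_basis]
    rw [hcomp]
  have hKimg : K = u +ᵥ (T '' Δ) := by
    rw [hTimg, hK, ← convexHull_vadd]
    congr 1
    ext x
    simp only [Set.mem_vadd_set, Set.mem_insert_iff, Set.mem_range, vadd_eq_add]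
    constructor
    · rintro ⟨i, rfl⟩
      rcases Fin.eq_castSucc_or_eq_last i with ⟨j, rfl⟩ | rfl
      · exact ⟨w j, Or.inr ⟨j, rfl⟩, by rw [hw]; simp⟩
      · exact ⟨0, Or.inl rfl, by rw [hu]; simp⟩
    · rintro ⟨y, (rfl | ⟨i, rfl⟩), rfl⟩
      · exact ⟨Fin.last n, by rw [hu]; simp⟩
      · exact ⟨i.castSucc, by rw [hw]; simp⟩
  -- volume of K
  have volK : volume K = ENNReal.ofReal |LinearMap.det T| * ENNReal.ofReal (1 / n.factorial) := by
    rw [hKimg, measure_vadd, Measure.addHaar_image_linearMap, hΔvol]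
  -- final computation
  have hfr : Module.finrank ℝ (EuclideanSpace ℝ (Fin n)) = n := finrank_euclideanSpace_fin
  rw [hPK, Measure.addHaar_smul, volK, hfr]
  have habs : |(-(n:ℝ)) ^ n| = (n:ℝ)^n := by rw [abs_pow, abs_neg, Nat.abs_cast]
  rw [habs]
  rw [← ENNReal.ofReal_mul (abs_nonneg _),
    ← ENNReal.ofReal_mul (by positivity : (0:ℝ) ≤ (n:ℝ)^n),
    ← ENNReal.ofReal_mul (mul_nonneg (abs_nonneg _) (by positivity))]
  have hf : ((n.factorial:ℝ)) ≠ 0 := Nat.cast_ne_zero.2 n.factorial_ne_zero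
  have harith : |LinearMap.det T| * (1/(n.factorial:ℝ)) * ((n:ℝ)^n * (|LinearMap.det T| * (1/(n.factorial:ℝ))))
      = ((n+1:ℝ))^(n+1) / ((n.factorial:ℝ))^2 := by
    have h2 : |LinearMap.det T|^2 = ((n+1:ℝ)/n)^n * (n+1) := by rw [sq_abs]; exact hdet2
    have hkey2 : ((n+1:ℝ)/n)^n * ((n:ℝ)^n) = (n+1:ℝ)^n := by
      rw [div_pow]; field_simp
    calc |LinearMap.det T| * (1/(n.factorial:ℝ)) * ((n:ℝ)^n * (|LinearMap.det T| * (1/(n.factorial:ℝ))))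
        = (|LinearMap.det T|^2) * ((n:ℝ)^n) * (1/(n.factorial:ℝ))^2 := by ring
      _ = (((n+1:ℝ)/n)^n * ((n:ℝ)^n)) * (n+1) * (1/(n.factorial:ℝ))^2 := by rw [h2]; ring
      _ = (n+1:ℝ)^n * (n+1) * (1/(n.factorial:ℝ))^2 := by rw [hkey2]
      _ = ((n+1:ℝ))^(n+1) / ((n.factorial:ℝ))^2 := by
          rw [pow_succ]
          field_simp
          ring
  rw [harith]
  rw [ENNReal.ofReal_div_of_pos (by positivity)]
  congr 1
  · rw [ENNReal.ofReal_pow (by positivity)]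
    congr 1
    rw [ENNReal.ofReal_add (by positivity) zero_le_one, ENNReal.ofReal_natCast,
      ENNReal.ofReal_one]
  · rw [ENNReal.ofReal_pow (by positivity), ENNReal.ofReal_natCast]
end
end

section
/- Let n ≥ 3, let a_1, …, a_{n−1} ∈ ℝ^n, let x ∈ ℝ^n, and let f : ℝ^{n−2} → ℝ be a function differentiable at a point t = (t_1, …, t_{n−2}). Define s(t) := a_1 + t_1(a_2 − a_1) + ⋯ + t_{n−2}(a_{n−1} − a_1) and r(t) := f(t) · s(t). Then the determinant of the n × n matrix whose columns are x, r(t), ∂r/∂t_1(t), …, ∂r/∂t_{n−2}(t) equals f(t)^{n−1} times the determinant of the n × n matrix whose columns are x, a_1, a_2, …, a_{n−1}. -/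
noncomputable section

/-- `s(t) = a₁ + t₁ (a₂ - a₁) + ⋯ + t_{n-2} (a_{n-1} - a₁)`, with `n = m + 2` and
0-based indexing of the `n - 1 = m + 1` vectors `a`. -/
def sMap (m : ℕ) (a : Fin (m + 1) → (Fin (m + 2) → ℝ)) :
    (Fin m → ℝ) → (Fin (m + 2) → ℝ) :=
  fun u => a 0 + ∑ i : Fin m, u i • (a i.succ - a 0)

/-- `r(t) = f(t) • s(t)`. -/
def rMap (m : ℕ) (a : Fin (m + 1) → (Fin (m + 2) → ℝ)) (f : (Fin m → ℝ) → ℝ) :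
    (Fin m → ℝ) → (Fin (m + 2) → ℝ) :=
  fun u => f u • sMap m a u

/-- The matrix with the given columns. -/
def matrixOfColumns (m : ℕ) (c : Fin m → (Fin m → ℝ)) : Matrix (Fin m) (Fin m) ℝ :=
  Matrix.of fun j k => c k j

lemma sMap_hasFDerivAt (m : ℕ) (a : Fin (m + 1) → (Fin (m + 2) → ℝ)) (t : Fin m → ℝ) :
    HasFDerivAt (sMap m a)
      (∑ i : Fin m, (ContinuousLinearMap.proj (R := ℝ) (φ := fun _ : Fin m => ℝ) i).smulRight
        (a i.succ - a 0)) t := by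
  have h : HasFDerivAt (fun u : Fin m → ℝ => a 0 + ∑ i : Fin m, u i • (a i.succ - a 0))
      (∑ i : Fin m, (ContinuousLinearMap.proj (R := ℝ) (φ := fun _ : Fin m => ℝ) i).smulRight
        (a i.succ - a 0)) t := by
    exact (HasFDerivAt.fun_sum fun i _ =>
      ((ContinuousLinearMap.proj (R := ℝ) (φ := fun _ : Fin m => ℝ) i).hasFDerivAt).smul_const
        (a i.succ - a 0)).const_add (a 0)
  exact h

lemma rMap_fderiv (m : ℕ) (a : Fin (m + 1) → (Fin (m + 2) → ℝ)) (f : (Fin m → ℝ) → ℝ)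
    (t : Fin m → ℝ) (hf : DifferentiableAt ℝ f t) (i : Fin m) :
    fderiv ℝ (rMap m a f) t (Pi.single i 1)
      = (fderiv ℝ f t (Pi.single i 1)) • sMap m a t + f t • (a i.succ - a 0) := by
  have hs := sMap_hasFDerivAt m a t
  have hr : HasFDerivAt (rMap m a f)
      (f t • (∑ i : Fin m, (ContinuousLinearMap.proj (R := ℝ) (φ := fun _ : Fin m => ℝ) i).smulRight
        (a i.succ - a 0)) + (fderiv ℝ f t).smulRight (sMap m a t)) t :=
    hf.hasFDerivAt.smul hs
  rw [hr.fderiv]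
  simp only [ContinuousLinearMap.add_apply, ContinuousLinearMap.smul_apply,
    ContinuousLinearMap.sum_apply, ContinuousLinearMap.smulRight_apply,
    ContinuousLinearMap.proj_apply]
  have hsum : ∑ j : Fin m, f t • ((Pi.single i (1:ℝ) : Fin m → ℝ) j) • (a j.succ - a 0)
      = f t • (a i.succ - a 0) := by
    rw [Fintype.sum_eq_single i]
    · simp
    · intro j hj
      simp [Pi.single_apply, Ne.symm hj]
  rw [Finset.smul_sum, hsum]
  exact add_comm _ _

/-- Column operation: adding multiples of a fixed column to the other columns
does not change the determinant. -/
lemma det_eq_of_forall_col_eq_smul_add_const' {n : ℕ} {A B : Matrix (Fin n) (Fin n) ℝ}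
    (c : Fin n → ℝ) (k : Fin n) (hk : c k = 0)
    (h : ∀ i j, A i j = B i j + c j * B i k) : A.det = B.det := by
  rw [← Matrix.det_transpose A, ← Matrix.det_transpose B]
  exact Matrix.det_eq_of_forall_row_eq_smul_add_const c k hk fun i j => h j i

/-- The determinant of the `n × n` matrix whose columns are
`x, r(t), ∂r/∂t₁(t), …, ∂r/∂t_{n-2}(t)` equals `f(t)^{n-1}` times the determinant of the
matrix with columns `x, a₁, …, a_{n-1}` (here `n = m + 2`, `m ≥ 1`, i.e. `n ≥ 3`). -/
theorem stmt13 (m : ℕ) (hm : 1 ≤ m)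
    (a : Fin (m + 1) → (Fin (m + 2) → ℝ)) (x : Fin (m + 2) → ℝ)
    (f : (Fin m → ℝ) → ℝ) (t : Fin m → ℝ)
    (hf : DifferentiableAt ℝ f t) :
    Matrix.det (matrixOfColumns (m + 2)
        (Fin.cons x (Fin.cons (rMap m a f t)
          (fun i : Fin m => fderiv ℝ (rMap m a f) t (Pi.single i 1)))))
      = f t ^ (m + 1) * Matrix.det (matrixOfColumns (m + 2) (Fin.cons x a)) := by
  set s : Fin (m + 2) → ℝ := sMap m a t with hs
  set b : Fin m → (Fin (m + 2) → ℝ) := fun i => a i.succ - a 0 with hb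
  set d : Fin m → ℝ := fun i => fderiv ℝ f t (Pi.single i 1) with hd
  have hcols : (fun i : Fin m => fderiv ℝ (rMap m a f) t (Pi.single i 1))
      = fun i : Fin m => d i • s + f t • b i := by
    funext i
    exact rMap_fderiv m a f t hf i
  rw [hcols]
  have hrt : rMap m a f t = f t • s := rfl
  rw [hrt]
  by_cases hft : f t = 0
  · rw [Matrix.det_eq_zero_of_column_eq_zero 1 (by
      intro j
      simp [matrixOfColumns, hft])]
    rw [hft, zero_pow (Nat.succ_ne_zero m), zero_mul]
  -- nonzero case
  set M1 := matrixOfColumns (m + 2) (Fin.cons x (Fin.cons (f t • s) (fun i => f t • b i)))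
    with hM1
  set M2 := matrixOfColumns (m + 2) (Fin.cons x (Fin.cons (f t • a 0) (fun i => f t • b i)))
    with hM2
  set M3 := matrixOfColumns (m + 2)
      (Fin.cons x (Fin.cons (f t • a 0) (fun i => f t • a i.succ))) with hM3
  set M4 := matrixOfColumns (m + 2) (Fin.cons x a) with hM4
  have step1 : Matrix.det (matrixOfColumns (m + 2)
      (Fin.cons x (Fin.cons (f t • s) (fun i => d i • s + f t • b i)))) = M1.det := by
    apply det_eq_of_forall_col_eq_smul_add_const'
      (Fin.cons 0 (Fin.cons 0 (fun i => d i / f t))) 1 (by simp)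
    intro i j
    refine Fin.cases ?_ (fun j0 => ?_) j
    · simp [matrixOfColumns, M1]
    · refine Fin.cases ?_ (fun j1 => ?_) j0
      · simp [matrixOfColumns, M1]
      · simp only [matrixOfColumns, M1, Matrix.of_apply, Fin.cons_succ, Fin.cons_zero, Fin.cons_one,
          Pi.add_apply, Pi.smul_apply, smul_eq_mul]
        field_simp
        ring
  have step2 : M1.det = M2.det := by
    have key := Matrix.det_updateCol_sum M2 1 (Fin.cons 0 (Fin.cons 1 (fun i => t i)))
    have hM1eq : M1 = M2.updateCol 1
        (fun k => ∑ i, (Fin.cons 0 (Fin.cons 1 (fun i => t i)) : Fin (m+2) → ℝ) i • M2 k i) := by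
      ext i j
      rcases eq_or_ne j 1 with rfl | hj
      · rw [Matrix.updateCol_self]
        show (f t • s) i = _
        rw [Fin.sum_univ_succ, Fin.sum_univ_succ]
        simp only [M2, matrixOfColumns, Matrix.of_apply, Fin.cons_zero, Fin.cons_succ,
          zero_smul, one_smul, zero_add, smul_eq_mul]
        simp only [hs, sMap, Pi.smul_apply, Pi.add_apply, Finset.sum_apply, Pi.sub_apply,
          smul_eq_mul, hb]
        simp only [zero_mul, zero_add, one_mul, mul_add, Finset.mul_sum]
        congr 1
        exact Finset.sum_congr rfl fun k _ => by ring
      · rw [Matrix.updateCol_ne hj]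
        revert hj
        refine Fin.cases (fun _ => ?_) (fun j0 => ?_) j
        · simp [M1, M2, matrixOfColumns]
        · refine Fin.cases (fun h => absurd rfl h) (fun j1 _ => ?_) j0
          simp [M1, M2, matrixOfColumns]
    rw [hM1eq, key, ← Fin.succ_zero_eq_one, Fin.cons_succ, Fin.cons_zero, one_smul]
  have step3 : M2.det = M3.det := by
    apply det_eq_of_forall_col_eq_smul_add_const'
      (Fin.cons 0 (Fin.cons 0 (fun _ => (-1 : ℝ)))) 1 (by simp)
    intro i j
    refine Fin.cases ?_ (fun j0 => ?_) j
    · simp [matrixOfColumns, M2, M3]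
    · refine Fin.cases ?_ (fun j1 => ?_) j0
      · simp [matrixOfColumns, M2, M3]
      · simp only [matrixOfColumns, M2, M3, Matrix.of_apply, Fin.cons_succ, Fin.cons_zero, hb]
        simp [Pi.sub_apply]
        ring
  have step4 : M3.det = f t ^ (m + 1) * M4.det := by
    have hprod : M3 = M4 * Matrix.diagonal (Fin.cons 1 (fun _ : Fin (m+1) => f t)) := by
      ext i j
      rw [Matrix.mul_diagonal]
      refine Fin.cases ?_ (fun j0 => ?_) j
      · simp [M3, M4, matrixOfColumns]
      · refine Fin.cases ?_ (fun j1 => ?_) j0 <;>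
          simp [M3, M4, matrixOfColumns, mul_comm]
    rw [hprod, Matrix.det_mul, Matrix.det_diagonal, Fin.prod_cons]
    simp [mul_comm]
  rw [step1, step2, step3, step4]
end
end

section
/- Let n ≥ 3 and fix vectors v_1, …, v_{n+1} ∈ ℝ^n with ⟪v_i, v_j⟫ = 1 if i = j and −1/n if i ≠ j, and let △^n = conv{v_1, …, v_{n+1}}. Let K ⊂ ℝ^n be a convex body with g(K) = K for every g ∈ SO(△^n). Let 2 ≤ k ≤ n−1 and let x be a point of the boundary of K lying in span{v_1, …, v_{k−1}}. If the gauge function μ_K is differentiable at x, then ∇μ_K(x) ∈ span{v_1, …, v_{k−1}}. -/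
noncomputable section
open Finset Pointwise

variable {n : ℕ} {v : Fin (n + 1) → EuclideanSpace ℝ (Fin n)}

lemma aux_row_sum (hn : 1 ≤ n)
    (hv : ∀ i j : Fin (n + 1), inner ℝ (v i) (v j) = if i = j then (1 : ℝ) else -1 / n)
    (i : Fin (n + 1)) : (inner ℝ (v i) (∑ j, v j) : ℝ) = 0 := by
  rw [inner_sum, Finset.sum_congr rfl (fun j _ => hv i j)]
  rw [← Finset.add_sum_erase _ _ (Finset.mem_univ i), if_pos rfl]
  rw [Finset.sum_congr rfl (fun j hj => if_neg (Finset.ne_of_mem_erase hj).symm)]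
  rw [Finset.sum_const, Finset.card_erase_of_mem (Finset.mem_univ i), Finset.card_univ,
    Fintype.card_fin]
  have hn' : (n : ℝ) ≠ 0 := Nat.cast_ne_zero.mpr (by omega)
  field_simp
  rw [Nat.add_sub_cancel, nsmul_eq_mul, mul_neg, mul_one_div_cancel hn']
  ring

lemma aux_sum_v (hn : 1 ≤ n)
    (hv : ∀ i j : Fin (n + 1), inner ℝ (v i) (v j) = if i = j then (1 : ℝ) else -1 / n) :
    ∑ j, v j = 0 := by
  have h : (inner ℝ (∑ j, v j) (∑ j, v j) : ℝ) = 0 := by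
    rw [sum_inner]
    exact Finset.sum_eq_zero fun i _ => aux_row_sum hn hv i
  exact inner_self_eq_zero.mp h

lemma aux_indep (hn : 1 ≤ n)
    (hv : ∀ i j : Fin (n + 1), inner ℝ (v i) (v j) = if i = j then (1 : ℝ) else -1 / n) :
    LinearIndependent ℝ (v ∘ Fin.castSucc) := by
  rw [Fintype.linearIndependent_iff]
  intro c hc
  simp only [Function.comp_apply] at hc
  have hn' : (n : ℝ) ≠ 0 := Nat.cast_ne_zero.mpr (by omega)
  have key : ∀ j : Fin n, c j * n + c j = ∑ i, c i := by
    intro j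
    have h0 : (inner ℝ (v (Fin.castSucc j)) (∑ i, c i • v (Fin.castSucc i)) : ℝ) = 0 := by
      rw [hc, inner_zero_right]
    rw [inner_sum] at h0
    simp only [real_inner_smul_right] at h0
    have hterm : ∀ i : Fin n, c i * (inner ℝ (v (Fin.castSucc j)) (v (Fin.castSucc i)) : ℝ)
        = c i * (-1 / n) + (if j = i then c j * (1 + 1/n) else 0) := by
      intro i
      rw [hv]
      by_cases h : j = i
      · subst h
        rw [if_pos rfl, if_pos rfl]
        ring
      · rw [if_neg (fun hh => h (Fin.castSucc_injective _ hh)), if_neg h]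
        ring
    rw [Finset.sum_congr rfl (fun i _ => hterm i), Finset.sum_add_distrib,
      Finset.sum_ite_eq _ j _, if_pos (Finset.mem_univ j), ← Finset.sum_mul] at h0
    have h1 : ((∑ i, c i) * (-1 / (n:ℝ))) * n + (c j * (1 + 1/(n:ℝ))) * n = 0 := by
      rw [← add_mul, h0, zero_mul]
    have e1 : (-1 / (n:ℝ)) * n = -1 := by field_simp
    have e2 : (1 + 1/(n:ℝ)) * n = n + 1 := by field_simp
    rw [mul_assoc, mul_assoc, e1, e2] at h1
    nlinarith [h1]
  have hsum : (∑ i, c i) = 0 := by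
    have h2 : ∑ j : Fin n, (c j * n + c j) = ∑ j : Fin n, ∑ i, c i :=
      Finset.sum_congr rfl fun j _ => key j
    rw [Finset.sum_add_distrib, ← Finset.sum_mul, Finset.sum_const, Finset.card_univ,
      Fintype.card_fin, nsmul_eq_mul] at h2
    nlinarith [h2]
  intro i
  have h3 := key i
  rw [hsum] at h3
  have h4 : c i * ((n:ℝ) + 1) = 0 := by linarith
  rcases mul_eq_zero.mp h4 with h | h
  · exact h
  · exfalso; have : (0:ℝ) < (n:ℝ) + 1 := by positivity
    linarith

lemma aux_span_top (hn : 1 ≤ n)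
    (hv : ∀ i j : Fin (n + 1), inner ℝ (v i) (v j) = if i = j then (1 : ℝ) else -1 / n) :
    Submodule.span ℝ (Set.range (v ∘ Fin.castSucc)) = ⊤ := by
  haveI : Nonempty (Fin n) := ⟨⟨0, by omega⟩⟩
  exact (aux_indep hn hv).span_eq_top_of_card_eq_finrank
    (by simp [finrank_euclideanSpace_fin])

lemma aux_span_top' (hn : 1 ≤ n)
    (hv : ∀ i j : Fin (n + 1), inner ℝ (v i) (v j) = if i = j then (1 : ℝ) else -1 / n) :
    Submodule.span ℝ (Set.range v) = ⊤ := by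
  refine top_unique ?_
  rw [← aux_span_top hn hv]
  exact Submodule.span_mono (Set.range_comp_subset_range _ _)

lemma aux_cube_eq_one {a : ℝ} (h : a ^ 3 = 1) : a = 1 :=
  (Odd.strictMono_pow (R := ℝ) (n := 3) (by decide)).injective
    (by simpa using h : (fun a : ℝ => a ^ 3) a = (fun a : ℝ => a ^ 3) 1)

lemma aux_perm_isom (hn : 1 ≤ n)
    (hv : ∀ i j : Fin (n + 1), inner ℝ (v i) (v j) = if i = j then (1 : ℝ) else -1 / n)
    (σ : Equiv.Perm (Fin (n + 1))) :
    ∃ g : EuclideanSpace ℝ (Fin n) ≃ₗᵢ[ℝ] EuclideanSpace ℝ (Fin n),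
      ∀ j, g (v j) = v (σ j) := by
  set b : Module.Basis (Fin n) ℝ (EuclideanSpace ℝ (Fin n)) :=
    Module.Basis.mk (aux_indep hn hv) (aux_span_top hn hv).ge with hb
  set L : EuclideanSpace ℝ (Fin n) →ₗ[ℝ] EuclideanSpace ℝ (Fin n) :=
    b.constr ℝ (fun i => v (σ (Fin.castSucc i))) with hLdef
  have hbi : ∀ i : Fin n, b i = v (Fin.castSucc i) := fun i => by
    rw [hb, Module.Basis.mk_apply]; rfl
  have hLc : ∀ i : Fin n, L (v (Fin.castSucc i)) = v (σ (Fin.castSucc i)) := by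
    intro i
    rw [← hbi i, hLdef, Module.Basis.constr_basis]
  have hL : ∀ j, L (v j) = v (σ j) := by
    intro j
    induction j using Fin.lastCases with
    | cast i => exact hLc i
    | last =>
      have hvl : v (Fin.last n) = -∑ i : Fin n, v (Fin.castSucc i) := by
        have := aux_sum_v hn hv
        rw [Fin.sum_univ_castSucc] at this
        linear_combination (norm := abel) this
      have hvl' : v (σ (Fin.last n)) = -∑ i : Fin n, v (σ (Fin.castSucc i)) := by
        have h0 : ∑ j, v (σ j) = 0 := by
          rw [Equiv.sum_comp σ v]; exact aux_sum_v hn hv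
        rw [Fin.sum_univ_castSucc] at h0
        linear_combination (norm := abel) h0
      rw [hvl, map_neg, map_sum, hvl']
      congr 1
      exact Finset.sum_congr rfl fun i _ => hLc i
  have hinner : ∀ a c : EuclideanSpace ℝ (Fin n), (inner ℝ (L a) (L c) : ℝ) = inner ℝ a c := by
    have hB : (innerₗ (EuclideanSpace ℝ (Fin n))).compl₁₂ L L = innerₗ _ := by
      apply LinearMap.ext_on (aux_span_top' hn hv)
      rintro _ ⟨j, rfl⟩
      apply LinearMap.ext_on (aux_span_top' hn hv)
      rintro _ ⟨l, rfl⟩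
      simp only [LinearMap.compl₁₂_apply, innerₗ_apply_apply, hL, hv]
      by_cases h : j = l
      · subst h; simp
      · rw [if_neg (fun hh => h (σ.injective hh)), if_neg h]
    intro a c
    have := DFunLike.congr_fun (DFunLike.congr_fun hB a) c
    simpa using this
  exact ⟨(L.isometryOfInner hinner).toLinearIsometryEquiv rfl, fun j => by
    rw [LinearIsometry.toLinearIsometryEquiv_apply, LinearMap.coe_isometryOfInner, hL]⟩

lemma aux_gauge_image {E : Type*} [NormedAddCommGroup E] [InnerProductSpace ℝ E]
    (g : E ≃ₗᵢ[ℝ] E) {K : Set E} (hgK : g '' K = K) (z : E) :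
    gauge K (g z) = gauge K z := by
  have key : ∀ (g' : E ≃ₗᵢ[ℝ] E), g' '' K = K → ∀ (r : ℝ) (z : E),
      z ∈ r • K → g' z ∈ r • K := by
    intro g' hg' r z hz
    obtain ⟨w, hw, rfl⟩ := hz
    rw [map_smul]
    exact Set.smul_mem_smul_set (hg' ▸ Set.mem_image_of_mem g' hw)
  have hsymmK : g.symm '' K = K := by
    have h2 : ⇑g.symm ∘ ⇑g = id := funext fun w => g.symm_apply_apply w
    conv_lhs => rw [← hgK]
    rw [← Set.image_comp, h2, Set.image_id]
  unfold gauge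
  congr 1
  ext r
  simp only [Set.mem_setOf_eq]
  constructor
  · rintro ⟨hr, hz⟩
    refine ⟨hr, ?_⟩
    have h3 := key g.symm hsymmK r _ hz
    rwa [g.symm_apply_apply] at h3
  · rintro ⟨hr, hz⟩
    exact ⟨hr, key g hgK r z hz⟩

lemma aux_cycle {m : ℕ} {a b c : Fin m} (hab : a ≠ b) (hac : a ≠ c) (hbc : b ≠ c) :
    ((Equiv.swap a b * Equiv.swap a c) b = a)
    ∧ (∀ x, x ≠ a → x ≠ b → x ≠ c → (Equiv.swap a b * Equiv.swap a c) x = x)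
    ∧ (∀ x, (Equiv.swap a b * Equiv.swap a c) ((Equiv.swap a b * Equiv.swap a c)
        ((Equiv.swap a b * Equiv.swap a c) x)) = x) := by
  set σ := Equiv.swap a b * Equiv.swap a c with hσ
  have happ : ∀ x, σ x = Equiv.swap a b (Equiv.swap a c x) := fun x => rfl
  have ha : σ a = c := by
    rw [happ, Equiv.swap_apply_left, Equiv.swap_apply_of_ne_of_ne hac.symm hbc.symm]
  have hb : σ b = a := by
    rw [happ, Equiv.swap_apply_of_ne_of_ne (Ne.symm hab) hbc, Equiv.swap_apply_right]
  have hc : σ c = b := by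
    rw [happ, Equiv.swap_apply_right, Equiv.swap_apply_left]
  have hfix : ∀ x, x ≠ a → x ≠ b → x ≠ c → σ x = x := by
    intro x hxa hxb hxc
    rw [happ, Equiv.swap_apply_of_ne_of_ne hxa hxc, Equiv.swap_apply_of_ne_of_ne hxa hxb]
  refine ⟨hb, hfix, fun x => ?_⟩
  by_cases h1 : x = a
  · subst h1; rw [ha, hc, hb]
  by_cases h2 : x = b
  · subst h2; rw [hb, ha, hc]
  by_cases h3 : x = c
  · subst h3; rw [hc, hb, ha]
  · rw [hfix x h1 h2 h3, hfix x h1 h2 h3, hfix x h1 h2 h3]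

def IsConvexBody {n : ℕ} (K : Set (EuclideanSpace ℝ (Fin n))) : Prop :=
  IsCompact K ∧ Convex ℝ K ∧ (interior K).Nonempty

theorem stmt14 (n : ℕ) (hn : 3 ≤ n) (v : Fin (n + 1) → EuclideanSpace ℝ (Fin n))
    (hv : ∀ i j : Fin (n + 1), inner ℝ (v i) (v j) = if i = j then (1 : ℝ) else -1 / n)
    (K : Set (EuclideanSpace ℝ (Fin n)))
    (hK : IsConvexBody K)
    (hsym : ∀ g : EuclideanSpace ℝ (Fin n) ≃ₗᵢ[ℝ] EuclideanSpace ℝ (Fin n),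
      LinearMap.det (g.toLinearEquiv : EuclideanSpace ℝ (Fin n) →ₗ[ℝ] EuclideanSpace ℝ (Fin n)) = 1 →
      g '' convexHull ℝ (Set.range v) = convexHull ℝ (Set.range v) → g '' K = K)
    (k : ℕ) (hk2 : 2 ≤ k) (hkn : k ≤ n - 1)
    (x : EuclideanSpace ℝ (Fin n)) (hxK : x ∈ frontier K)
    (hxH : x ∈ Submodule.span ℝ (v '' {i : Fin (n + 1) | (i : ℕ) < k - 1}))
    (y : EuclideanSpace ℝ (Fin n)) (hy : HasGradientAt (gauge K) y x) :
    y ∈ Submodule.span ℝ (v '' {i : Fin (n + 1) | (i : ℕ) < k - 1}) := by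
  classical
  have hn1 : 1 ≤ n := by omega
  -- Step 1 : the gradient has equal inner ℝ products with all v_a, a ≥ k - 1
  have hstep : ∀ a b : Fin (n + 1), k - 1 ≤ (a : ℕ) → k - 1 ≤ (b : ℕ) →
      (inner ℝ y (v a) : ℝ) = inner ℝ y (v b) := by
    intro a b ha hb
    rcases eq_or_ne a b with rfl | hab
    · rfl
    obtain ⟨m, hm1, hm2, hma, hmb⟩ :
        ∃ m, k - 1 ≤ m ∧ m < n + 1 ∧ m ≠ (a : ℕ) ∧ m ≠ (b : ℕ) := by
      have hab' : (a : ℕ) ≠ (b : ℕ) := fun h => hab (Fin.ext h)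
      by_cases h1 : (a : ℕ) = k - 1 ∨ (b : ℕ) = k - 1
      · by_cases h2 : (a : ℕ) = k ∨ (b : ℕ) = k
        · exact ⟨k + 1, by omega, by omega, by omega, by omega⟩
        · push_neg at h2
          exact ⟨k, by omega, by omega, by omega, by omega⟩
      · push_neg at h1
        exact ⟨k - 1, le_rfl, by omega, by omega, by omega⟩
    set c : Fin (n + 1) := ⟨m, hm2⟩ with hcdef
    have hcv : (c : ℕ) = m := rfl
    have hac : a ≠ c := fun h => hma (by rw [h, hcv])
    have hbc : b ≠ c := fun h => hmb (by rw [h, hcv])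
    obtain ⟨hσb, hσfix, hσ3⟩ := aux_cycle hab hac hbc
    set σ := Equiv.swap a b * Equiv.swap a c with hσdef
    obtain ⟨g, hg⟩ := aux_perm_isom hn1 hv σ
    set M := (g.toLinearEquiv : EuclideanSpace ℝ (Fin n) →ₗ[ℝ] EuclideanSpace ℝ (Fin n))
      with hMdef
    have hMg : ⇑M = ⇑g := by
      ext z
      simp [hMdef]
    have hM : ∀ j, M (v j) = v (σ j) := fun j => by rw [hMdef]; exact hg j
    have h3 : M ∘ₗ (M ∘ₗ M) = LinearMap.id := by
      apply LinearMap.ext_on (aux_span_top' hn1 hv)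
      rintro _ ⟨j, rfl⟩
      simp only [LinearMap.comp_apply, LinearMap.id_apply, hM, hσ3]
    have hdet : LinearMap.det M = 1 := by
      have hd := congrArg LinearMap.det h3
      rw [LinearMap.det_comp, LinearMap.det_comp, LinearMap.det_id] at hd
      exact aux_cube_eq_one (by linear_combination hd)
    have hrange : ⇑g '' Set.range v = Set.range v := by
      rw [← Set.range_comp]
      ext z
      constructor
      · rintro ⟨j, rfl⟩; exact ⟨σ j, (hg j).symm⟩
      · rintro ⟨j, rfl⟩
        exact ⟨σ.symm j, by rw [Function.comp_apply, hg, Equiv.apply_symm_apply]⟩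
    have hhull : ⇑g '' convexHull ℝ (Set.range v) = convexHull ℝ (Set.range v) := by
      have himg := M.image_convexHull (Set.range v)
      rw [hMg] at himg
      rw [himg, hrange]
    have hKg := hsym g hdet hhull
    have hgauge : ∀ z, gauge K (g z) = gauge K z := aux_gauge_image g hKg
    have hgx : g x = x := by
      refine Submodule.span_induction (p := fun z _ => g z = z) ?_ ?_ ?_ ?_ hxH
      · rintro _ ⟨i, hi, rfl⟩
        simp only [Set.mem_setOf_eq] at hi
        rw [hg, hσfix i (Fin.ne_of_val_ne (by omega)) (Fin.ne_of_val_ne (by omega))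
          (Fin.ne_of_val_ne (by rw [hcv]; omega))]
      · exact map_zero g
      · intro p q _ _ hp hq; rw [map_add, hp, hq]
      · intro r p _ hp; rw [map_smul, hp]
    set D := InnerProductSpace.toDual ℝ (EuclideanSpace ℝ (Fin n)) y with hDdef
    set G := (g.toContinuousLinearEquiv :
      EuclideanSpace ℝ (Fin n) →L[ℝ] EuclideanSpace ℝ (Fin n)) with hGdef
    have hGcoe : ⇑G = ⇑g := by
      ext z
      simp [hGdef]
    have hfd : HasFDerivAt (gauge K) D x := hy.hasFDerivAt
    have hfd2 : HasFDerivAt (gauge K) D (g x) := by rw [hgx]; exact hfd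
    have hgd : HasFDerivAt (⇑g) G x := by
      have := G.hasFDerivAt (x := x)
      rwa [hGcoe] at this
    have hcomp : HasFDerivAt (gauge K ∘ ⇑g) (D.comp G) x := hfd2.comp x hgd
    have hfun : gauge K ∘ ⇑g = gauge K := funext fun z => hgauge z
    rw [hfun] at hcomp
    have hEq : D.comp G = D := hcomp.unique hfd
    have hvb := DFunLike.congr_fun hEq (v b)
    simp only [ContinuousLinearMap.coe_comp', Function.comp_apply] at hvb
    have hGvb : G (v b) = v a := by
      rw [show G (v b) = g (v b) from congrFun hGcoe (v b), hg, hσb]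
    rw [hGvb, hDdef, InnerProductSpace.toDual_apply_apply, InnerProductSpace.toDual_apply_apply] at hvb
    exact hvb
  -- Step 2 : linear algebra
  set H := Submodule.span ℝ (v '' {i : Fin (n + 1) | (i : ℕ) < k - 1}) with hHdef
  set p := (H.orthogonalProjection y : EuclideanSpace ℝ (Fin n)) with hpdef
  set w := y - p with hwdef
  have hpH : p ∈ H := SetLike.coe_mem _
  have hwH : w ∈ Hᗮ := Submodule.sub_starProjection_mem_orthogonal (K := H) y
  have hw0 : ∀ i : Fin (n + 1), (i : ℕ) < k - 1 → (inner ℝ w (v i) : ℝ) = 0 := by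
    intro i hi
    have hvH : v i ∈ H := Submodule.subset_span ⟨i, hi, rfl⟩
    have h0 := (Submodule.mem_orthogonal _ w).mp hwH (v i) hvH
    rw [real_inner_comm]
    exact h0
  have hpconst : ∀ a b : Fin (n + 1), k - 1 ≤ (a : ℕ) → k - 1 ≤ (b : ℕ) →
      (inner ℝ p (v a) : ℝ) = inner ℝ p (v b) := by
    intro a b ha hb
    refine Submodule.span_induction
      (p := fun q _ => (inner ℝ q (v a) : ℝ) = inner ℝ q (v b)) ?_ ?_ ?_ ?_ hpH
    · rintro _ ⟨i, hi, rfl⟩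
      simp only [Set.mem_setOf_eq] at hi
      rw [hv, hv, if_neg (fun h : i = a => by rw [h] at hi; omega),
        if_neg (fun h : i = b => by rw [h] at hi; omega)]
    · simp
    · intro s t _ _ hs ht; rw [inner_add_left, inner_add_left, hs, ht]
    · intro r s _ hs; rw [real_inner_smul_left, real_inner_smul_left, hs]
  have hwconst : ∀ a b : Fin (n + 1), k - 1 ≤ (a : ℕ) → k - 1 ≤ (b : ℕ) →
      (inner ℝ w (v a) : ℝ) = inner ℝ w (v b) := by
    intro a b ha hb
    rw [hwdef, inner_sub_left, inner_sub_left, hstep a b ha hb, hpconst a b ha hb]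
  have hk1n : k - 1 < n + 1 := by omega
  set a0 : Fin (n + 1) := ⟨k - 1, hk1n⟩ with ha0
  have ha0v : (a0 : ℕ) = k - 1 := rfl
  set cst := (inner ℝ w (v a0) : ℝ) with hcst
  have hterm : ∀ i : Fin (n + 1), (inner ℝ w (v i) : ℝ) = if (i : ℕ) < k - 1 then 0 else cst := by
    intro i
    by_cases hi : (i : ℕ) < k - 1
    · rw [if_pos hi]; exact hw0 i hi
    · rw [if_neg hi]
      exact hwconst i a0 (by omega) (by rw [ha0v])
  have hsum0 : ∑ i, (inner ℝ w (v i) : ℝ) = 0 := by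
    rw [← inner_sum, aux_sum_v hn1 hv, inner_zero_right]
  have hcst0 : cst = 0 := by
    rw [Finset.sum_congr rfl (fun i _ => hterm i), Finset.sum_ite, Finset.sum_const_zero,
      zero_add, Finset.sum_const, nsmul_eq_mul] at hsum0
    have hmem : a0 ∈ Finset.univ.filter (fun i : Fin (n + 1) => ¬ (i : ℕ) < k - 1) :=
      Finset.mem_filter.mpr ⟨Finset.mem_univ _, by rw [ha0v]; omega⟩
    have hpos := Finset.card_pos.mpr ⟨a0, hmem⟩
    have hcard : ((Finset.univ.filter (fun i : Fin (n + 1) => ¬ (i : ℕ) < k - 1)).card : ℝ) ≠ 0 :=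
      Nat.cast_ne_zero.mpr hpos.ne'
    rcases mul_eq_zero.mp hsum0 with h | h
    · exact absurd h hcard
    · exact h
  have hwall : ∀ i, (inner ℝ w (v i) : ℝ) = 0 := by
    intro i
    rw [hterm i]
    split
    · rfl
    · exact hcst0
  have hwzero : w = 0 := by
    have hsway : ∀ u ∈ Submodule.span ℝ (Set.range v), (inner ℝ w u : ℝ) = 0 := by
      intro u hu
      refine Submodule.span_induction (p := fun u _ => (inner ℝ w u : ℝ) = 0) ?_ ?_ ?_ ?_ hu
      · rintro _ ⟨j, rfl⟩; exact hwall j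
      · exact inner_zero_right w
      · intro s t _ _ hs ht; rw [inner_add_right, hs, ht, add_zero]
      · intro r s _ hs; rw [real_inner_smul_right, hs, mul_zero]
    have h0 : (inner ℝ w w : ℝ) = 0 :=
      hsway w (by rw [aux_span_top' hn1 hv]; trivial)
    exact inner_self_eq_zero.mp h0
  have hyp : y = p := by
    rw [hwdef, sub_eq_zero] at hwzero
    exact hwzero
  rw [hyp]
  exact hpH
end
end

section
/- Let n ≥ 3 and let K ⊂ ℝ^n be a convex body with g(K) = K for every g ∈ SO(♦^n). Let e_1, …, e_n be the standard basis of ℝ^n, let 2 ≤ k ≤ n−1, and let x be a point of the boundary of K lying in span{e_2, …, e_k}. If the gauge function μ_K is differentiable at x, then ∇μ_K(x) ∈ span{e_2, …, e_k}. -/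
noncomputable section

def crossPolytope (n : ℕ) : Set (EuclideanSpace ℝ (Fin n)) :=
  {x | ∑ i, |x i| ≤ 1}

/-- `stdBasis n i` is the `i`-th standard basis vector `e_{i+1}` of `ℝⁿ` (0-based index). -/
def stdBasis (n : ℕ) (i : Fin n) : EuclideanSpace ℝ (Fin n) :=
  EuclideanSpace.single i (1 : ℝ)

/-- The span of the standard basis vectors `e₂, …, e_k` (1-based as in the paper),
that is, of `stdBasis n i` for `1 ≤ i ≤ k - 1` in 0-based indexing. -/
def spanE (n k : ℕ) : Submodule ℝ (EuclideanSpace ℝ (Fin n)) :=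
  Submodule.span ℝ (stdBasis n '' {i : Fin n | 1 ≤ (i : ℕ) ∧ (i : ℕ) ≤ k - 1})

open Pointwise

namespace Stmt15Aux

variable {n : ℕ}

def flipLin (i j : Fin n) : EuclideanSpace ℝ (Fin n) →ₗ[ℝ] EuclideanSpace ℝ (Fin n) where
  toFun v := WithLp.toLp 2 (fun l => if l = i ∨ l = j then -v l else v l)
  map_add' a b := by ext l; simp only [PiLp.add_apply, PiLp.toLp_apply]; split_ifs <;> ring
  map_smul' c a := by
    ext l; simp only [PiLp.smul_apply, PiLp.toLp_apply, RingHom.id_apply, smul_eq_mul]; split_ifs <;> ring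

lemma flipLin_apply (i j : Fin n) (v : EuclideanSpace ℝ (Fin n)) (l : Fin n) :
    flipLin i j v l = if l = i ∨ l = j then -v l else v l := rfl

lemma flipLin_invol (i j : Fin n) : Function.Involutive (flipLin i j) := by
  intro v; ext l
  simp only [flipLin_apply]
  split_ifs <;> ring

def flipIso (i j : Fin n) : EuclideanSpace ℝ (Fin n) ≃ₗᵢ[ℝ] EuclideanSpace ℝ (Fin n) where
  toLinearEquiv := LinearEquiv.ofInvolutive (flipLin i j) (flipLin_invol i j)
  norm_map' v := by
    simp only [EuclideanSpace.norm_eq]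
    congr 1
    refine Finset.sum_congr rfl fun l _ => ?_
    show ‖if l = i ∨ l = j then -v l else v l‖ ^ 2 = _
    split_ifs <;> simp

lemma flipIso_apply (i j : Fin n) (v : EuclideanSpace ℝ (Fin n)) (l : Fin n) :
    flipIso i j v l = if l = i ∨ l = j then -v l else v l := rfl

lemma flipIso_invol (i j : Fin n) (v : EuclideanSpace ℝ (Fin n)) :
    flipIso i j (flipIso i j v) = v := flipLin_invol i j v

lemma flipIso_det (i j : Fin n) (hij : i ≠ j) :
    LinearMap.det ((flipIso i j).toLinearEquiv :
      EuclideanSpace ℝ (Fin n) →ₗ[ℝ] EuclideanSpace ℝ (Fin n)) = 1 := by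
  classical
  set b := (EuclideanSpace.basisFun (Fin n) ℝ).toBasis
  have heq : ((flipIso i j).toLinearEquiv :
      EuclideanSpace ℝ (Fin n) →ₗ[ℝ] EuclideanSpace ℝ (Fin n)) = flipLin i j := rfl
  rw [heq, ← LinearMap.det_toMatrix b]
  have hM : LinearMap.toMatrix b b (flipLin i j) =
      Matrix.diagonal (fun l => if l = i ∨ l = j then (-1 : ℝ) else 1) := by
    ext p q
    rw [LinearMap.toMatrix_apply]
    simp only [b, OrthonormalBasis.coe_toBasis_repr_apply, EuclideanSpace.basisFun_repr,
      OrthonormalBasis.coe_toBasis, EuclideanSpace.basisFun_apply, flipLin_apply,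
      EuclideanSpace.single_apply, Matrix.diagonal_apply]
    by_cases hpq : p = q <;> by_cases h : p = i ∨ p = j <;> simp_all
  rw [hM, Matrix.det_diagonal]
  have herw : ∀ l : Fin n, (if l = i ∨ l = j then (-1:ℝ) else 1) =
      (if l = i then (-1:ℝ) else 1) * (if l = j then (-1:ℝ) else 1) := by
    intro l; by_cases h1 : l = i <;> by_cases h2 : l = j <;> simp_all
  simp_rw [herw]
  rw [Finset.prod_mul_distrib, Finset.prod_ite_eq' Finset.univ i (fun _ => (-1:ℝ)),
    Finset.prod_ite_eq' Finset.univ j (fun _ => (-1:ℝ))]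
  norm_num

lemma flipIso_cross (i j : Fin n) :
    flipIso i j '' crossPolytope n = crossPolytope n := by
  have hmem : ∀ v : EuclideanSpace ℝ (Fin n),
      flipIso i j v ∈ crossPolytope n ↔ v ∈ crossPolytope n := by
    intro v
    simp only [crossPolytope, Set.mem_setOf_eq]
    have : ∀ l : Fin n, |flipIso i j v l| = |v l| := by
      intro l; rw [flipIso_apply]; split_ifs <;> simp
    rw [Finset.sum_congr rfl fun l _ => this l]
  ext z
  constructor
  · rintro ⟨w, hw, rfl⟩
    exact (hmem w).2 hw
  · intro hz
    exact ⟨flipIso i j z, (hmem _).2 ((flipIso_invol i j z).symm ▸ hz), flipIso_invol i j z⟩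

lemma gauge_comp (g : EuclideanSpace ℝ (Fin n) ≃ₗ[ℝ] EuclideanSpace ℝ (Fin n))
    (K : Set (EuclideanSpace ℝ (Fin n))) (hgK : g '' K = K)
    (v : EuclideanSpace ℝ (Fin n)) : gauge K (g v) = gauge K v := by
  rw [gauge_def, gauge_def]
  congr 1
  ext r
  simp only [Set.mem_setOf_eq, and_congr_right_iff]
  intro _
  have h1 : r • K = g '' (r • K) := by
    rw [Set.image_smul_comm g r K (fun b => g.map_smul r b), hgK]
  rw [h1, g.injective.mem_set_image, ← h1]

lemma spanE_coord_zero {k : ℕ} (v : EuclideanSpace ℝ (Fin n)) (hv : v ∈ spanE n k)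
    (l : Fin n) (hl : ¬(1 ≤ (l : ℕ) ∧ (l : ℕ) ≤ k - 1)) : v l = 0 := by
  classical
  let f : EuclideanSpace ℝ (Fin n) →ₗ[ℝ] ℝ :=
    { toFun := fun w => w l, map_add' := fun _ _ => rfl, map_smul' := fun _ _ => rfl }
  have hle : spanE n k ≤ LinearMap.ker f := by
    rw [spanE, Submodule.span_le]
    rintro _ ⟨i, hi, rfl⟩
    have hil : l ≠ i := by
      rintro rfl; exact hl hi
    show (stdBasis n i) l = 0
    simp [f, stdBasis, LinearMap.mem_ker, EuclideanSpace.single_apply, hil]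
  exact hle hv

end Stmt15Aux

open Stmt15Aux in
theorem stmt15 (n : ℕ) (hn : 3 ≤ n)
    (K : Set (EuclideanSpace ℝ (Fin n)))
    (hK : IsConvexBody K)
    (hsym : ∀ g : EuclideanSpace ℝ (Fin n) ≃ₗᵢ[ℝ] EuclideanSpace ℝ (Fin n),
      LinearMap.det (g.toLinearEquiv : EuclideanSpace ℝ (Fin n) →ₗ[ℝ] EuclideanSpace ℝ (Fin n)) = 1 →
      g '' crossPolytope n = crossPolytope n → g '' K = K)
    (k : ℕ) (hk2 : 2 ≤ k) (hkn : k ≤ n - 1)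
    (x : EuclideanSpace ℝ (Fin n)) (hxK : x ∈ frontier K)
    (hxH : x ∈ spanE n k)
    (y : EuclideanSpace ℝ (Fin n)) (hy : HasGradientAt (gauge K) y x) :
    y ∈ spanE n k := by
  classical
  have hD : HasFDerivAt (gauge K) (InnerProductSpace.toDual ℝ _ y) x :=
    hasGradientAt_iff_hasFDerivAt.mp hy
  -- key: coordinates outside the index set vanish
  have key : ∀ i : Fin n, ¬(1 ≤ (i : ℕ) ∧ (i : ℕ) ≤ k - 1) → y i = 0 := by
    intro i hi
    obtain ⟨j, hj, hij⟩ : ∃ j : Fin n, ¬(1 ≤ (j : ℕ) ∧ (j : ℕ) ≤ k - 1) ∧ i ≠ j := by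
      by_cases h0 : (i : ℕ) = 0
      · refine ⟨⟨k, by omega⟩, by simp; omega, ?_⟩
        intro h; apply_fun (Fin.val) at h; simp at h; omega
      · refine ⟨⟨0, by omega⟩, by simp, ?_⟩
        intro h; apply_fun (Fin.val) at h; simp at h; omega
    set g := flipIso i j with hg
    have hgK : g '' K = K := hsym g (flipIso_det i j hij) (flipIso_cross i j)
    have hgx : g x = x := by
      ext l
      rw [flipIso_apply]
      split_ifs with h
      · have hxl : x l = 0 := by
          apply spanE_coord_zero x hxH
          rcases h with rfl | rfl
          · exact hi
          · exact hj
        rw [hxl]; ring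
      · rfl
    -- the composed function equals gauge K
    have hcomp : (gauge K) ∘ g = gauge K := by
      funext v
      exact gauge_comp g.toLinearEquiv K hgK v
    have hg' : HasFDerivAt (fun v => g v)
        (g.toContinuousLinearEquiv : EuclideanSpace ℝ (Fin n) →L[ℝ] EuclideanSpace ℝ (Fin n)) x :=
      (g.toContinuousLinearEquiv :
        EuclideanSpace ℝ (Fin n) →L[ℝ] EuclideanSpace ℝ (Fin n)).hasFDerivAt
    have hD' : HasFDerivAt (gauge K) (InnerProductSpace.toDual ℝ _ y) (g x) := by rw [hgx]; exact hD
    have hcompD : HasFDerivAt ((gauge K) ∘ g)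
        ((InnerProductSpace.toDual ℝ _ y).comp
          (g.toContinuousLinearEquiv : EuclideanSpace ℝ (Fin n) →L[ℝ] EuclideanSpace ℝ (Fin n))) x :=
      hD'.comp x hg'
    rw [hcomp] at hcompD
    have huniq := hD.unique hcompD
    have happ := congrArg (fun (T : EuclideanSpace ℝ (Fin n) →L[ℝ] ℝ) => T (stdBasis n i)) huniq
    simp only [ContinuousLinearMap.comp_apply] at happ
    have hge : (g.toContinuousLinearEquiv :
        EuclideanSpace ℝ (Fin n) →L[ℝ] EuclideanSpace ℝ (Fin n)) (stdBasis n i) = -(stdBasis n i) := by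
      ext l
      show g (stdBasis n i) l = _
      rw [flipIso_apply]
      simp only [PiLp.neg_apply]
      by_cases h : l = i ∨ l = j
      · rw [if_pos h]
      · push_neg at h
        rw [if_neg (by tauto)]
        have hz : stdBasis n i l = 0 := by
          simp [stdBasis, EuclideanSpace.single_apply, h.1]
        rw [hz, neg_zero]
    rw [hge] at happ
    have : inner ℝ y (stdBasis n i) = -(inner ℝ y (stdBasis n i) : ℝ) := by
      have h1 := happ
      simp only [InnerProductSpace.toDual_apply_apply, inner_neg_right] at h1
      linarith
    have h0 : (inner ℝ y (stdBasis n i) : ℝ) = 0 := by linarith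
    have : (inner ℝ y (stdBasis n i) : ℝ) = y i := by
      simp [stdBasis, EuclideanSpace.inner_single_right]
    rw [this] at h0
    exact h0
  -- decompose y in the standard basis
  have hsum := ((EuclideanSpace.basisFun (Fin n) ℝ).toBasis).sum_repr y
  rw [← hsum]
  apply Submodule.sum_mem
  intro l _
  by_cases hl : 1 ≤ (l : ℕ) ∧ (l : ℕ) ≤ k - 1
  · apply Submodule.smul_mem
    apply Submodule.subset_span
    refine ⟨l, hl, ?_⟩
    simp [stdBasis, EuclideanSpace.basisFun_apply]
  · have : ((EuclideanSpace.basisFun (Fin n) ℝ).toBasis.repr y) l = 0 := by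
      rw [OrthonormalBasis.coe_toBasis_repr_apply, EuclideanSpace.basisFun_repr]
      exact key l hl
    rw [this, zero_smul]
    exact Submodule.zero_mem _
end
end
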